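/- If X is a finite set and C ⊆ 2^X is a maximum class of VC dimension d (i.e., |C(A)| = Φ_d(|A|) for all A ⊆ X), then C is maximal of VC dimension d: for any c ∈ 2^X \ C, the class C ∪ {c} has VC dimension d+1. -/

import Mathlib

open Set

def traceOn {X : Type*} (C : Set (Set X)) (A : Set X) : Set (Set X) :=
  {s | ∃ c ∈ C, s = c ∩ A}

def Shatters {X : Type*} (C : Set (Set X)) (A : Set X) : Prop :=
  ∀ s ⊆ A, ∃ c ∈ C, c ∩ A = s

def VCDimEq {X : Type*} (C : Set (Set X)) (d : ℕ) : Prop :=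
  (∃ A : Set X, A.Finite ∧ A.ncard = d ∧ Shatters C A) ∧
    ∀ A : Set X, A.Finite → Shatters C A → A.ncard ≤ d

def Phi (d n : ℕ) : ℕ := if d ≤ n then ∑ i ∈ Finset.range (d + 1), n.choose i else 2 ^ n

lemma Phi_zero_left (n : ℕ) : Phi 0 n = 1 := by simp [Phi]

lemma Phi_zero_right (d : ℕ) : Phi d 0 = 1 := by
  rcases d with _ | d
  · simp [Phi]
  · simp [Phi]

lemma sum_pascal (k n : ℕ) : ∑ i ∈ Finset.range (k+1), (n+1).choose i
    = ∑ i ∈ Finset.range (k+1), n.choose i + ∑ i ∈ Finset.range k, n.choose i := by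
  induction k with
  | zero => simp
  | succ k ih =>
    rw [Finset.sum_range_succ, ih, Finset.sum_range_succ (f := fun i => n.choose i) (n := k+1),
      Finset.sum_range_succ (f := fun i => n.choose i) (n := k), Nat.choose_succ_succ]
    ring

lemma Phi_pascal (d n : ℕ) : Phi (d+1) (n+1) = Phi (d+1) n + Phi d n := by
  rcases lt_trichotomy d n with h | h | h
  · have h1 : d + 1 ≤ n := h
    simp only [Phi, if_pos (by omega : d + 1 ≤ n + 1), if_pos h1, if_pos (le_of_lt h)]
    exact sum_pascal (d+1) n
  · subst h
    simp only [Phi, if_pos (le_refl (d+1)), if_neg (by omega : ¬ d + 1 ≤ d), if_pos (le_refl d)]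
    rw [Nat.sum_range_choose, Nat.sum_range_choose]
    ring
  · simp only [Phi, if_neg (by omega : ¬ d + 1 ≤ n + 1), if_neg (by omega : ¬ d + 1 ≤ n),
      if_neg (by omega : ¬ d ≤ n)]
    ring

lemma Phi_lt_two_pow {d n : ℕ} (h : d < n) : Phi d n < 2 ^ n := by
  rw [Phi, if_pos (le_of_lt h), ← Nat.sum_range_choose n]
  apply Finset.sum_lt_sum_of_subset (by simp; omega) (i := n) (by simp) (by simp; omega)
    (Nat.choose_pos le_rfl)
  intro j _ _; exact Nat.zero_le _

lemma Phi_add_two_le {d n : ℕ} (h : d + 2 ≤ n) : Phi d n + 2 ≤ 2 ^ n := by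
  rw [Phi, if_pos (by omega), ← Nat.sum_range_choose n]
  have h1 : ∑ i ∈ Finset.range (d+2), n.choose i ≤ ∑ i ∈ Finset.range n, n.choose i := by
    apply Finset.sum_le_sum_of_subset (by intro i hi; simp at hi ⊢; omega)
  have h2 : ∑ i ∈ Finset.range (d+2), n.choose i
      = ∑ i ∈ Finset.range (d+1), n.choose i + n.choose (d+1) := Finset.sum_range_succ _ _
  have h3 : 1 ≤ n.choose (d+1) := Nat.choose_pos (by omega)
  have h4 : ∑ i ∈ Finset.range (n+1), n.choose i
      = ∑ i ∈ Finset.range n, n.choose i + n.choose n := Finset.sum_range_succ _ _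
  simp [Nat.choose_self] at h4
  omega

lemma Phi_le_two_pow (d n : ℕ) : Phi d n ≤ 2 ^ n := by
  rcases lt_or_ge d n with h | h
  · exact le_of_lt (Phi_lt_two_pow h)
  · rw [Phi]; split
    · rw [← Nat.sum_range_choose n]
      exact Finset.sum_le_sum_of_subset (by intro i hi; simp at hi ⊢; omega)
    · exact le_rfl

section
set_option linter.unusedSectionVars false
variable {X : Type*} [Finite X]

-- pairs (the "reduction" relative to traces on insert x A)
def pairsC (C : Set (Set X)) (A : Set X) (x : X) : Set (Set X) :=
  {t | t ⊆ A ∧ t ∈ traceOn C (insert x A) ∧ insert x t ∈ traceOn C (insert x A)}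

lemma mem_traceOn {C : Set (Set X)} {A s : Set X} : s ∈ traceOn C A ↔ ∃ c ∈ C, s = c ∩ A :=
  Iff.rfl

lemma traceOn_subset {C : Set (Set X)} {A s : Set X} (h : s ∈ traceOn C A) : s ⊆ A := by
  obtain ⟨c, _, rfl⟩ := h; exact inter_subset_right

lemma traceOn_traceOn {C : Set (Set X)} {A B : Set X} (h : A ⊆ B) :
    traceOn (traceOn C B) A = traceOn C A := by
  ext t
  constructor
  · rintro ⟨s, ⟨e, he, rfl⟩, rfl⟩
    exact ⟨e, he, by rw [inter_assoc, inter_eq_right.mpr h]⟩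
  · rintro ⟨e, he, rfl⟩
    exact ⟨e ∩ B, ⟨e, he, rfl⟩, by rw [inter_assoc, inter_eq_right.mpr h]⟩

lemma traceOn_eq_self {C : Set (Set X)} {B : Set X} (h : ∀ e ∈ C, e ⊆ B) :
    traceOn C B = C := by
  ext t
  constructor
  · rintro ⟨e, he, rfl⟩; rwa [inter_eq_left.mpr (h e he)]
  · intro ht; exact ⟨t, ht, by rw [inter_eq_left.mpr (h t ht)]⟩

/-- The fiber counting identity. -/
lemma trace_insert_ncard (C : Set (Set X)) (A : Set X) (x : X) (hx : x ∉ A) :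
    (traceOn C (insert x A)).ncard = (traceOn C A).ncard + (pairsC C A x).ncard := by
  classical
  set E := traceOn C (insert x A) with hE
  set E0 : Set (Set X) := {t ∈ E | x ∉ t} with hE0
  set E1 : Set (Set X) := {t ∈ E | x ∈ t} with hE1
  set I : Set (Set X) := (fun t => t \ {x}) '' E1 with hI
  have hsplit : E = E0 ∪ E1 := by
    ext t; simp only [hE0, hE1, mem_union, mem_sep_iff]; tauto
  have hdisj : Disjoint E0 E1 := by
    rw [disjoint_left]; rintro t ⟨_, h1⟩ ⟨_, h2⟩; exact h1 h2
  have hcard1 : E.ncard = E0.ncard + E1.ncard := by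
    rw [hsplit]; exact ncard_union_eq hdisj
  have hinj : Set.InjOn (fun t => t \ {x}) E1 := by
    rintro t1 ⟨_, h1⟩ t2 ⟨_, h2⟩ h
    have h' : insert x (t1 \ {x}) = insert x (t2 \ {x}) := by
      show insert x ((fun t => t \ {x}) t1) = insert x ((fun t => t \ {x}) t2); rw [h]
    rwa [insert_diff_singleton, insert_eq_of_mem h1, insert_diff_singleton,
      insert_eq_of_mem h2] at h'
  have hcard2 : I.ncard = E1.ncard := ncard_image_of_injOn hinj
  have hT : traceOn C A = E0 ∪ I := by
    ext s
    constructor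
    · rintro ⟨e, he, rfl⟩
      by_cases hxe : x ∈ e
      · right
        refine ⟨e ∩ insert x A, ⟨⟨e, he, rfl⟩, by simp [hxe]⟩, ?_⟩
        show (e ∩ insert x A) \ {x} = e ∩ A
        rw [inter_insert_of_mem hxe, insert_sdiff_self_of_notMem (fun h => hx h.2)]
      · exact Or.inl ⟨⟨e, he, (inter_insert_of_notMem hxe).symm⟩, fun h => hx h.2⟩
    · rintro (⟨⟨e, he, rfl⟩, hxs⟩ | ⟨t, ⟨⟨e, he, rfl⟩, hxt⟩, rfl⟩)
      · have hxe : x ∉ e := fun h => hxs ⟨h, mem_insert _ _⟩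
        exact ⟨e, he, (inter_insert_of_notMem hxe)⟩
      · have hxe : x ∈ e := by
          rcases hxt with ⟨h1, _⟩; exact h1
        refine ⟨e, he, ?_⟩
        show (e ∩ insert x A) \ {x} = e ∩ A
        rw [inter_insert_of_mem hxe, insert_sdiff_self_of_notMem (fun h => hx h.2)]
  have hP : pairsC C A x = E0 ∩ I := by
    ext t
    constructor
    · rintro ⟨htA, htE, hxtE⟩
      have hxt : x ∉ t := fun h => hx (htA h)
      refine ⟨⟨htE, hxt⟩, ⟨insert x t, ⟨hxtE, mem_insert _ _⟩, ?_⟩⟩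
      show (insert x t) \ {x} = t
      exact insert_sdiff_self_of_notMem hxt
    · rintro ⟨⟨htE, hxt⟩, ⟨t1, ⟨ht1E, hxt1⟩, rfl⟩⟩
      refine ⟨?_, htE, ?_⟩
      · have h1 : t1 \ {x} ⊆ (insert x A) \ {x} := diff_subset_diff_left (traceOn_subset ht1E)
        rwa [insert_sdiff_self_of_notMem hx] at h1
      · show insert x (t1 \ {x}) ∈ E
        rwa [insert_diff_singleton, insert_eq_of_mem hxt1]
  have key := ncard_union_add_ncard_inter E0 I
  rw [← hT, ← hP] at key
  omega

lemma ncard_powerset (A : Set X) : {s : Set X | s ⊆ A}.ncard = 2 ^ A.ncard := by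
  generalize hn : A.ncard = n
  induction n generalizing A with
  | zero =>
    have hA : A = ∅ := by rwa [ncard_eq_zero] at hn
    subst hA
    have : {s : Set X | s ⊆ ∅} = {∅} := by
      ext s; simp [subset_empty_iff]
    rw [this, ncard_singleton]; norm_num
  | succ n ih =>
    have hA : A.Nonempty := by rw [← ncard_pos]; omega
    obtain ⟨x, hx⟩ := hA
    set A' := A \ {x} with hA'
    have hxA' : x ∉ A' := by simp [hA']
    have hcard : A'.ncard = n := by
      have h := ncard_diff_singleton_add_one hx (A.toFinite)
      rw [← hA'] at h
      omega
    have hsplit : {s : Set X | s ⊆ A} = {s : Set X | s ⊆ A'} ∪ (insert x '' {s : Set X | s ⊆ A'}) := by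
      ext s
      constructor
      · intro hs
        by_cases hxs : x ∈ s
        · right
          refine ⟨s \ {x}, fun y hy => ⟨hs hy.1, hy.2⟩, ?_⟩
          rw [insert_diff_singleton, insert_eq_of_mem hxs]
        · left
          exact fun y hy => ⟨hs hy, fun hc => hxs (hc ▸ hy)⟩
      · rintro (hs | ⟨t, ht, rfl⟩)
        · exact hs.trans diff_subset
        · exact insert_subset hx (ht.trans diff_subset)
    have hdisj : Disjoint {s : Set X | s ⊆ A'} (insert x '' {s : Set X | s ⊆ A'}) := by
      rw [disjoint_left]
      rintro s hs ⟨t, ht, rfl⟩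
      exact hxA' (hs (mem_insert _ _))
    have hinj : Set.InjOn (insert x) {s : Set X | s ⊆ A'} := by
      intro s1 h1 s2 h2 h
      have hx1 : x ∉ s1 := fun hc => hxA' (h1 hc)
      have hx2 : x ∉ s2 := fun hc => hxA' (h2 hc)
      have := congrArg (· \ ({x} : Set X)) h
      simpa [insert_sdiff_self_of_notMem, hx1, hx2] using this
    rw [hsplit, ncard_union_eq hdisj, ncard_image_of_injOn hinj, ih A' hcard]
    ring

lemma shatters_pairs {C : Set (Set X)} {A0 A : Set X} {x : X} (hA : A ⊆ A0) (hx : x ∉ A0)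
    (h : Shatters (pairsC C A0 x) A) : Shatters C (insert x A) := by
  intro s hs
  obtain ⟨w, ⟨hwA0, hwE, hxwE⟩, hwA⟩ := h (s ∩ A) inter_subset_right
  have hxA : x ∉ A := fun hc => hx (hA hc)
  by_cases hxs : x ∈ s
  · obtain ⟨f, hf, hfw⟩ := hxwE
    refine ⟨f, hf, ?_⟩
    have hxf : x ∈ f := by
      have : x ∈ f ∩ insert x A0 := by rw [← hfw]; exact mem_insert _ _
      exact this.1
    have hfA : f ∩ A = s ∩ A := by
      calc f ∩ A = (f ∩ insert x A0) ∩ A := by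
            rw [inter_assoc, inter_eq_right.mpr (hA.trans (subset_insert _ _))]
        _ = (insert x w) ∩ A := by rw [← hfw]
        _ = w ∩ A := insert_inter_of_notMem hxA
        _ = s ∩ A := hwA
    rw [inter_insert_of_mem hxf, hfA]
    ext y
    simp only [mem_insert_iff, mem_inter_iff]
    constructor
    · rintro (rfl | ⟨h1, _⟩)
      · exact hxs
      · exact h1
    · intro hy
      rcases mem_insert_iff.mp (hs hy) with rfl | hyA
      · exact Or.inl rfl
      · exact Or.inr ⟨hy, hyA⟩
  · obtain ⟨e, he, hew⟩ := hwE
    refine ⟨e, he, ?_⟩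
    have hxe : x ∉ e := by
      intro hc
      have hxw : x ∈ w := by rw [hew]; exact ⟨hc, mem_insert _ _⟩
      exact hx (hwA0 hxw)
    rw [inter_insert_of_notMem hxe]
    have hsA : s ⊆ A := by
      intro y hy
      rcases mem_insert_iff.mp (hs hy) with rfl | hyA
      · exact absurd hy hxs
      · exact hyA
    have heA : e ∩ A = w ∩ A := by
      rw [hew, inter_assoc, inter_eq_right.mpr (hA.trans (subset_insert _ _))]
    rw [heA, hwA, inter_eq_left.mpr hsA]

lemma sauer_zero {C : Set (Set X)} {B : Set X}
    (h : ∀ A ⊆ B, Shatters C A → A.ncard ≤ 0) : (traceOn C B).ncard ≤ 1 := by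
  have hss : (traceOn C B).Subsingleton := by
    intro t1 h1 t2 h2
    by_contra hne
    obtain ⟨y, hy⟩ : ∃ y, (y ∈ t1 ∧ y ∉ t2) ∨ (y ∈ t2 ∧ y ∉ t1) := by
      by_contra hc; push_neg at hc; apply hne; ext y; have := hc y; tauto
    have hyB : y ∈ B := by
      rcases hy with ⟨h', _⟩ | ⟨h', _⟩
      exacts [traceOn_subset h1 h', traceOn_subset h2 h']
    have hsh : Shatters C {y} := by
      intro s hs
      obtain ⟨e1, he1, ht1⟩ := h1
      obtain ⟨e2, he2, ht2⟩ := h2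
      by_cases hys : y ∈ s
      · have hs1 : s = {y} := subset_antisymm hs (singleton_subset_iff.mpr hys)
        rcases hy with ⟨hmem, _⟩ | ⟨hmem, _⟩
        · refine ⟨e1, he1, ?_⟩
          rw [hs1]
          refine subset_antisymm inter_subset_right (singleton_subset_iff.mpr ⟨?_, rfl⟩)
          have : y ∈ e1 ∩ B := ht1 ▸ hmem
          exact this.1
        · refine ⟨e2, he2, ?_⟩
          rw [hs1]
          refine subset_antisymm inter_subset_right (singleton_subset_iff.mpr ⟨?_, rfl⟩)
          have : y ∈ e2 ∩ B := ht2 ▸ hmem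
          exact this.1
      · have hs0 : s = ∅ := by
          rw [eq_empty_iff_forall_notMem]
          intro z hz
          have := hs hz
          rw [mem_singleton_iff] at this
          exact hys (this ▸ hz)
        rcases hy with ⟨_, hnmem⟩ | ⟨_, hnmem⟩
        · refine ⟨e2, he2, ?_⟩
          rw [hs0, eq_empty_iff_forall_notMem]
          rintro z ⟨hz1, hz2⟩
          rw [mem_singleton_iff] at hz2
          subst hz2
          exact hnmem (by rw [ht2]; exact ⟨hz1, hyB⟩)
        · refine ⟨e1, he1, ?_⟩
          rw [hs0, eq_empty_iff_forall_notMem]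
          rintro z ⟨hz1, hz2⟩
          rw [mem_singleton_iff] at hz2
          subst hz2
          exact hnmem (by rw [ht1]; exact ⟨hz1, hyB⟩)
    have := h {y} (singleton_subset_iff.mpr hyB) hsh
    rw [ncard_singleton] at this
    omega
  rcases (traceOn C B).eq_empty_or_nonempty with he | ⟨t, ht⟩
  · rw [he]; simp
  · have : traceOn C B ⊆ {t} := fun u hu => hss hu ht
    calc (traceOn C B).ncard ≤ ({t} : Set (Set X)).ncard := ncard_le_ncard this
      _ = 1 := ncard_singleton t

lemma sauer : ∀ (n : ℕ) (B : Set X), B.ncard ≤ n → ∀ (C : Set (Set X)) (k : ℕ),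
    (∀ A ⊆ B, Shatters C A → A.ncard ≤ k) → (traceOn C B).ncard ≤ Phi k B.ncard := by
  intro n
  induction n with
  | zero =>
    intro B hB C k hsh
    have hBe : B = ∅ := (ncard_eq_zero B.toFinite).mp (le_antisymm hB (Nat.zero_le _))
    subst hBe
    rw [ncard_empty, Phi_zero_right]
    exact sauer_zero fun A hA hs => by rw [subset_empty_iff] at hA; subst hA; simp
  | succ n ih =>
    intro B hB C k hsh
    rcases B.eq_empty_or_nonempty with rfl | ⟨x, hxB⟩
    · rw [ncard_empty, Phi_zero_right]
      exact sauer_zero fun A hA hs => by rw [subset_empty_iff] at hA; subst hA; simp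
    set B' := B \ {x} with hB'
    have hxB' : x ∉ B' := by simp [hB']
    have hins : insert x B' = B := by
      rw [hB', insert_diff_singleton, insert_eq_of_mem hxB]
    have hcard : B'.ncard + 1 = B.ncard := ncard_diff_singleton_add_one hxB
    have hB'n : B'.ncard ≤ n := by omega
    have fib := trace_insert_ncard C B' x hxB'
    rw [hins] at fib
    rcases k with _ | k
    · rw [Phi_zero_left]
      exact sauer_zero hsh
    · have h1 : (traceOn C B').ncard ≤ Phi (k+1) B'.ncard :=
        ih B' hB'n C (k+1) (fun A hA hs => hsh A (hA.trans diff_subset) hs)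
      have h2 : (pairsC C B' x).ncard ≤ Phi k B'.ncard := by
        have h3 : (traceOn (pairsC C B' x) B').ncard ≤ Phi k B'.ncard := by
          apply ih B' hB'n (pairsC C B' x) k
          intro A hA hsA
          have h4 := hsh (insert x A) (by rw [← hins]; exact insert_subset_insert hA)
            (shatters_pairs hA hxB' hsA)
          have hxA : x ∉ A := fun hc => hxB' (hA hc)
          rw [ncard_insert_of_notMem hxA] at h4
          omega
        rwa [traceOn_eq_self (fun t ht => ht.1)] at h3
      have hp : Phi (k+1) B.ncard = Phi (k+1) B'.ncard + Phi k B'.ncard := by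
        rw [← hcard, Phi_pascal]
      omega

lemma extremal : ∀ (n : ℕ) (B : Set X), B.ncard ≤ n → ∀ (C : Set (Set X)) (k : ℕ),
    (∀ A ⊆ B, Shatters C A → A.ncard ≤ k) →
    (traceOn C B).ncard = Phi k B.ncard →
    ∀ A ⊆ B, (traceOn C A).ncard = Phi k A.ncard := by
  intro n
  induction n with
  | zero =>
    intro B hB C k hsh heq A hA
    have hBe : B = ∅ := (ncard_eq_zero B.toFinite).mp (le_antisymm hB (Nat.zero_le _))
    subst hBe
    rw [subset_empty_iff] at hA
    subst hA
    exact heq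
  | succ n ih =>
    intro B hB C k hsh heq A hA
    by_cases hAB : A = B
    · subst hAB; exact heq
    obtain ⟨x, hxB, hxA⟩ : ∃ x, x ∈ B ∧ x ∉ A := by
      by_contra hc; push_neg at hc
      exact hAB (subset_antisymm hA hc)
    set B' := B \ {x} with hB'
    have hxB' : x ∉ B' := by simp [hB']
    have hins : insert x B' = B := by
      rw [hB', insert_diff_singleton, insert_eq_of_mem hxB]
    have hcard : B'.ncard + 1 = B.ncard := ncard_diff_singleton_add_one hxB
    have hB'n : B'.ncard ≤ n := by omega
    have hAB' : A ⊆ B' := fun y hy => ⟨hA hy, fun hc => hxA (mem_singleton_iff.mp hc ▸ hy)⟩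
    rcases k with _ | k
    · rw [Phi_zero_left]
      have hle : (traceOn C A).ncard ≤ 1 :=
        sauer_zero (fun A'' hA'' hs => hsh A'' (hA''.trans hA) hs)
      have hne : (traceOn C A).Nonempty := by
        have h1 : (traceOn C B).Nonempty := by
          rw [← ncard_pos, heq, Phi_zero_left]; omega
        obtain ⟨t, e, he, _⟩ := h1
        exact ⟨e ∩ A, e, he, rfl⟩
      have := (ncard_pos (traceOn C A).toFinite).mpr hne
      omega
    · have fib := trace_insert_ncard C B' x hxB'
      rw [hins] at fib
      have h1 : (traceOn C B').ncard ≤ Phi (k+1) B'.ncard :=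
        sauer B'.ncard B' le_rfl C (k+1) (fun A'' hA'' hs => hsh A'' (hA''.trans diff_subset) hs)
      have h2 : (pairsC C B' x).ncard ≤ Phi k B'.ncard := by
        have h3 : (traceOn (pairsC C B' x) B').ncard ≤ Phi k B'.ncard := by
          apply sauer B'.ncard B' le_rfl (pairsC C B' x) k
          intro A'' hA'' hsA
          have h4 := hsh (insert x A'') (by rw [← hins]; exact insert_subset_insert hA'')
            (shatters_pairs hA'' hxB' hsA)
          have hxA'' : x ∉ A'' := fun hc => hxB' (hA'' hc)
          rw [ncard_insert_of_notMem hxA''] at h4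
          omega
        rwa [traceOn_eq_self (fun t ht => ht.1)] at h3
      have hp : Phi (k+1) B.ncard = Phi (k+1) B'.ncard + Phi k B'.ncard := by
        rw [← hcard, Phi_pascal]
      have heqB' : (traceOn C B').ncard = Phi (k+1) B'.ncard := by omega
      exact ih B' hB'n C (k+1) (fun A'' hA'' hs => hsh A'' (hA''.trans diff_subset) hs) heqB' A hAB'

lemma empty_case {C : Set (Set X)} {d : ℕ} (hsup : ∀ e ∈ C, e ⊆ (∅ : Set X))
    (hmax : (traceOn C ∅).ncard = Phi d 0) {c : Set X} (hc : c ⊆ ∅) (hcC : c ∉ C) : False := by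
  rw [Phi_zero_right] at hmax
  have hne : (traceOn C ∅).Nonempty := by rw [← ncard_pos]; omega
  obtain ⟨t, e, he, _⟩ := hne
  have he0 : e = ∅ := subset_empty_iff.mp (hsup e he)
  have hc0 : c = ∅ := subset_empty_iff.mp hc
  exact hcC ((hc0.trans he0.symm) ▸ he)

lemma shatter_bound {C : Set (Set X)} {B : Set X} {d : ℕ}
    (hmax : ∀ A ⊆ B, (traceOn C A).ncard = Phi d A.ncard) :
    ∀ A ⊆ B, Shatters C A → A.ncard ≤ d := by
  intro A hA hsA
  by_contra hcon
  push_neg at hcon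
  have h2 : (traceOn C A).ncard = Phi d A.ncard := hmax A hA
  have h3 : {s : Set X | s ⊆ A} ⊆ traceOn C A := by
    intro s hs
    obtain ⟨e, he, heq⟩ := hsA s hs
    exact ⟨e, he, heq.symm⟩
  have h4 : 2 ^ A.ncard ≤ (traceOn C A).ncard := by
    rw [← _root_.ncard_powerset A]
    exact ncard_le_ncard h3
  have := Phi_lt_two_pow hcon
  omega

lemma insert_inter_eq_self {s A : Set X} {x : X} (hs : s ⊆ insert x A) (hxs : x ∈ s) :
    insert x (s ∩ A) = s := by
  ext y
  simp only [mem_insert_iff, mem_inter_iff]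
  constructor
  · rintro (rfl | ⟨h1, _⟩)
    · exact hxs
    · exact h1
  · intro hy
    rcases mem_insert_iff.mp (hs hy) with rfl | hyA
    · exact Or.inl rfl
    · exact Or.inr ⟨hy, hyA⟩

lemma subset_of_not_mem {s A : Set X} {x : X} (hs : s ⊆ insert x A) (hxs : x ∉ s) : s ⊆ A := by
  intro y hy
  rcases mem_insert_iff.mp (hs hy) with rfl | hyA
  · exact absurd hy hxs
  · exact hyA

lemma key : ∀ (n : ℕ) (B : Set X), B.ncard ≤ n → ∀ (d : ℕ) (C : Set (Set X)),
    (∀ e ∈ C, e ⊆ B) →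
    (∀ A ⊆ B, (traceOn C A).ncard = Phi d A.ncard) →
    ∀ c ⊆ B, c ∉ C → ∃ A ⊆ B, A.ncard = d + 1 ∧ Shatters (insert c C) A := by
  intro n
  induction n with
  | zero =>
    intro B hB d C hsup hmax c hcB hcC
    have hBe : B = ∅ := (ncard_eq_zero B.toFinite).mp (le_antisymm hB (Nat.zero_le _))
    subst hBe
    exact absurd (empty_case hsup (by simpa using hmax ∅ Subset.rfl) hcB hcC) not_false
  | succ n ih =>
    intro B hB d C hsup hmax c hcB hcC
    rcases B.eq_empty_or_nonempty with rfl | ⟨x, hxB⟩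
    · exact absurd (empty_case hsup (by simpa using hmax ∅ Subset.rfl) hcB hcC) not_false
    set B' := B \ {x} with hB'
    have hxB' : x ∉ B' := by simp [hB']
    have hins : insert x B' = B := by
      rw [hB', insert_diff_singleton, insert_eq_of_mem hxB]
    have hcard : B'.ncard + 1 = B.ncard := ncard_diff_singleton_add_one hxB
    have hB'n : B'.ncard ≤ n := by omega
    rcases d with _ | d'
    · -- d = 0 : C is a single set
      have h1 : (traceOn C B).ncard = 1 := by rw [hmax B Subset.rfl, Phi_zero_left]
      rw [traceOn_eq_self hsup] at h1
      obtain ⟨c0, hc0⟩ := ncard_eq_one.mp h1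
      have hc0C : c0 ∈ C := by rw [hc0]; exact rfl
      have hne : c ≠ c0 := fun h => hcC (h ▸ hc0C)
      obtain ⟨y, hy⟩ : ∃ y, (y ∈ c ∧ y ∉ c0) ∨ (y ∈ c0 ∧ y ∉ c) := by
        by_contra hcon; push_neg at hcon
        apply hne; ext y; have := hcon y; tauto
      have hyB : y ∈ B := by
        rcases hy with ⟨h1', _⟩ | ⟨h1', _⟩
        exacts [hcB h1', hsup c0 hc0C h1']
      refine ⟨{y}, singleton_subset_iff.mpr hyB, ncard_singleton y, ?_⟩
      intro s hs
      by_cases hys : y ∈ s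
      · have hs1 : s = {y} := subset_antisymm hs (singleton_subset_iff.mpr hys)
        have hfull : ∀ w : Set X, y ∈ w → w ∩ {y} = s := by
          intro w hw
          rw [hs1]
          exact subset_antisymm inter_subset_right (singleton_subset_iff.mpr ⟨hw, rfl⟩)
        rcases hy with ⟨h1', _⟩ | ⟨h1', _⟩
        · exact ⟨c, mem_insert _ _, hfull c h1'⟩
        · exact ⟨c0, mem_insert_of_mem _ hc0C, hfull c0 h1'⟩
      · have hs0 : s = ∅ := by
          rw [eq_empty_iff_forall_notMem]
          intro z hz
          have := hs hz
          rw [mem_singleton_iff] at this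
          exact hys (this ▸ hz)
        have hempty : ∀ w : Set X, y ∉ w → w ∩ {y} = s := by
          intro w hw
          rw [hs0, eq_empty_iff_forall_notMem]
          rintro z ⟨hz1, hz2⟩
          rw [mem_singleton_iff] at hz2
          exact hw (hz2 ▸ hz1)
        rcases hy with ⟨_, h2'⟩ | ⟨_, h2'⟩
        · exact ⟨c0, mem_insert_of_mem _ hc0C, hempty c0 h2'⟩
        · exact ⟨c, mem_insert _ _, hempty c h2'⟩
    · -- d = d' + 1
      by_cases hc' : (c ∩ B') ∈ traceOn C B'
      · -- Case 2: set-valued reduction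
        obtain ⟨e0, he0, he0eq⟩ := hc'
        -- he0eq : c ∩ B' = e0 ∩ B'
        have he0B : e0 ⊆ B := hsup e0 he0
        have hxor : ¬ (x ∈ e0 ↔ x ∈ c) := by
          intro hiff
          apply hcC
          have : c = e0 := by
            ext y
            rcases eq_or_ne y x with rfl | hyx
            · exact hiff.symm
            · constructor
              · intro hyc
                have : y ∈ c ∩ B' := ⟨hyc, by
                  rcases mem_insert_iff.mp (hins ▸ hcB hyc : y ∈ insert x B') with h | h
                  · exact absurd h hyx
                  · exact h⟩
                rw [he0eq] at this
                exact this.1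
              · intro hye
                have : y ∈ e0 ∩ B' := ⟨hye, by
                  rcases mem_insert_iff.mp (hins ▸ he0B hye : y ∈ insert x B') with h | h
                  · exact absurd h hyx
                  · exact h⟩
                rw [← he0eq] at this
                exact this.1
          exact this ▸ he0
        set Cx := pairsC C B' x with hCxdef
        have hCxsup : ∀ t ∈ Cx, t ⊆ B' := fun t ht => ht.1
        have hshC : ∀ A ⊆ B, Shatters C A → A.ncard ≤ d'+1 := shatter_bound hmax
        have hCxsh : ∀ A ⊆ B', Shatters Cx A → A.ncard ≤ d' := by
          intro A hA hsA
          have h5 := hshC (insert x A) (by rw [← hins]; exact insert_subset_insert hA)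
            (shatters_pairs hA hxB' hsA)
          have hxA : x ∉ A := fun hc'' => hxB' (hA hc'')
          rw [ncard_insert_of_notMem hxA] at h5
          omega
        have fib := trace_insert_ncard C B' x hxB'
        rw [hins, hmax B Subset.rfl, hmax B' diff_subset, ← hCxdef] at fib
        have hp : Phi (d'+1) B.ncard = Phi (d'+1) B'.ncard + Phi d' B'.ncard := by
          rw [← hcard, Phi_pascal]
        have hCxcard : (traceOn Cx B').ncard = Phi d' B'.ncard := by
          rw [traceOn_eq_self hCxsup]; omega
        have hCxmax : ∀ A ⊆ B', (traceOn Cx A).ncard = Phi d' A.ncard :=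
          extremal B'.ncard B' le_rfl Cx d' hCxsh hCxcard
        have hmemCiff : ∀ t, t ∈ traceOn C (insert x B') ↔ t ∈ C := by
          intro t; rw [hins, traceOn_eq_self hsup]
        have hcnotCx : (c ∩ B') ∉ Cx := by
          rintro ⟨_, hc'C, hxc'C⟩
          rw [hmemCiff] at hc'C hxc'C
          by_cases hxc : x ∈ c
          · have : insert x (c ∩ B') = c := by
              rw [← inter_insert_of_mem hxc, hins, inter_eq_left.mpr hcB]
            exact hcC (this ▸ hxc'C)
          · have : c ∩ B' = c := by
              rw [← inter_insert_of_notMem hxc, hins, inter_eq_left.mpr hcB]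
            exact hcC (this ▸ hc'C)
        obtain ⟨A, hAB', hAcard, hAsh⟩ :=
          ih B' hB'n d' Cx hCxsup hCxmax (c ∩ B') inter_subset_right hcnotCx
        have hxA : x ∉ A := fun hc'' => hxB' (hAB' hc'')
        have hinter : ∀ w : Set X, w ⊆ B' → w ∩ A = (w ∩ B') ∩ A := by
          intro w hw
          rw [inter_eq_left.mpr hw]
        refine ⟨insert x A, by rw [← hins]; exact insert_subset_insert hAB',
          by rw [ncard_insert_of_notMem hxA, hAcard], ?_⟩
        intro s hs
        obtain ⟨w, hw, hwA⟩ := hAsh (s ∩ A) inter_subset_right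
        rcases mem_insert_iff.mp hw with rfl | hwCx
        · -- w = c ∩ B'
          have hcA : c ∩ A = s ∩ A := by
            rw [← hwA, inter_assoc, inter_eq_right.mpr hAB']
          have he0A : e0 ∩ A = s ∩ A := by
            have h6 : e0 ∩ A = (e0 ∩ B') ∩ A := by
              rw [inter_assoc, inter_eq_right.mpr hAB']
            rw [h6, ← he0eq, inter_assoc, inter_eq_right.mpr hAB', hcA]
          by_cases hxs : x ∈ s
          · by_cases hxc : x ∈ c
            · refine ⟨c, mem_insert _ _, ?_⟩
              rw [inter_insert_of_mem hxc, hcA, insert_inter_eq_self hs hxs]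
            · have hxe0 : x ∈ e0 := by tauto
              refine ⟨e0, mem_insert_of_mem _ he0, ?_⟩
              rw [inter_insert_of_mem hxe0, he0A, insert_inter_eq_self hs hxs]
          · have hsA : s ⊆ A := subset_of_not_mem hs hxs
            by_cases hxc : x ∈ c
            · have hxe0 : x ∉ e0 := by tauto
              refine ⟨e0, mem_insert_of_mem _ he0, ?_⟩
              rw [inter_insert_of_notMem hxe0, he0A, inter_eq_left.mpr hsA]
            · refine ⟨c, mem_insert _ _, ?_⟩
              rw [inter_insert_of_notMem hxc, hcA, inter_eq_left.mpr hsA]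
        · -- w ∈ Cx
          obtain ⟨hwB', hwC, hxwC⟩ := hwCx
          rw [hmemCiff] at hwC hxwC
          have hxw : x ∉ w := fun hc'' => hxB' (hwB' hc'')
          by_cases hxs : x ∈ s
          · refine ⟨insert x w, mem_insert_of_mem _ hxwC, ?_⟩
            rw [insert_inter_of_mem (mem_insert _ _), inter_insert_of_notMem hxw, hwA,
              insert_inter_eq_self hs hxs]
          · have hsA : s ⊆ A := subset_of_not_mem hs hxs
            refine ⟨w, mem_insert_of_mem _ hwC, ?_⟩
            rw [inter_insert_of_notMem hxw, hwA, inter_eq_left.mpr hsA]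
      · -- Case 1: restriction
        have hC2sup : ∀ e ∈ traceOn C B', e ⊆ B' := fun e he => traceOn_subset he
        have hC2max : ∀ A ⊆ B', (traceOn (traceOn C B') A).ncard = Phi (d'+1) A.ncard := by
          intro A hA
          rw [traceOn_traceOn hA]
          exact hmax A (hA.trans diff_subset)
        obtain ⟨A, hAB', hAcard, hAsh⟩ :=
          ih B' hB'n (d'+1) (traceOn C B') hC2sup hC2max (c ∩ B') inter_subset_right hc'
        refine ⟨A, hAB'.trans diff_subset, hAcard, ?_⟩
        intro s hs
        obtain ⟨w, hw, hws⟩ := hAsh s hs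
        rcases mem_insert_iff.mp hw with rfl | hw'
        · exact ⟨c, mem_insert _ _, by rw [← hws, inter_assoc, inter_eq_right.mpr hAB']⟩
        · obtain ⟨e, he, rfl⟩ := hw'
          exact ⟨e, mem_insert_of_mem _ he, by rw [← hws, inter_assoc, inter_eq_right.mpr hAB']⟩

end

/-- On a finite set, a d-maximum class is d-maximal: adding any new set
raises the VC dimension to d+1. -/
theorem maximum_implies_maximal {X : Type*} [Finite X] (C : Set (Set X)) (d : ℕ)
    (hVC : VCDimEq C d)
    (hmax : ∀ A : Set X, (traceOn C A).ncard = Phi d A.ncard) :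
    ∀ c : Set X, c ∉ C → VCDimEq (insert c C) (d + 1) := by
  intro c hcC
  constructor
  · obtain ⟨A, hAu, hAcard, hAsh⟩ :=
      key (univ : Set X).ncard univ le_rfl d C (fun e _ => subset_univ e)
        (fun A _ => hmax A) c (subset_univ c) hcC
    exact ⟨A, A.toFinite, hAcard, hAsh⟩
  · intro A _ hsA
    by_contra hcon
    push_neg at hcon
    have h3 : {s : Set X | s ⊆ A} ⊆ traceOn (insert c C) A := by
      intro s hs
      obtain ⟨e, he, heq⟩ := hsA s hs
      exact ⟨e, he, heq.symm⟩
    have h4 : 2 ^ A.ncard ≤ (traceOn (insert c C) A).ncard := by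
      rw [← _root_.ncard_powerset A]
      exact ncard_le_ncard h3
    have h5 : traceOn (insert c C) A ⊆ insert (c ∩ A) (traceOn C A) := by
      rintro t ⟨e, he, rfl⟩
      rcases mem_insert_iff.mp he with rfl | he'
      · exact mem_insert _ _
      · exact mem_insert_of_mem _ ⟨e, he', rfl⟩
    have h6 : (traceOn (insert c C) A).ncard ≤ (traceOn C A).ncard + 1 :=
      le_trans (ncard_le_ncard h5) (ncard_insert_le _ _)
    rw [hmax A] at h6
    have h7 := Phi_add_two_le (show d + 2 ≤ A.ncard by omega)
    omega
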